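/- Let Γ be a finite k-regular graph, neither complete nor null, with clique number equal to chromatic number and primitive automorphism group. Suppose A₁ and A₂ are two vertex sets, each of size 3 and each satisfying |∪_{a∈Aᵢ} N(a)| ≤ k+2. If |A₁ ∩ A₂| ≥ 2, then A₁ = A₂. -/

import Mathlib

def IsPrimitivePermGroup {X : Type*} (G : Subgroup (Equiv.Perm X)) : Prop :=
  (∀ x y : X, ∃ g ∈ G, g x = y) ∧
  ∀ R : X → X → Prop, Equivalence R →
    (∀ g ∈ G, ∀ x y : X, R x y → R (g x) (g y)) →
    (∀ x y : X, R x y ↔ x = y) ∨ (∀ x y : X, R x y)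

section Aux

variable {X : Type*} [Fintype X] [DecidableEq X] (Γ : SimpleGraph X) [DecidableRel Γ.Adj]

lemma cliqueImage {r : ℕ} (g : Equiv.Perm X) (hg : ∀ x y : X, Γ.Adj x y ↔ Γ.Adj (g x) (g y))
    {K : Finset X} (hK : Γ.IsNClique r K) : Γ.IsNClique r (K.image g) := by
  constructor
  · intro a ha b hb hab
    simp only [Finset.coe_image, Set.mem_image, Finset.mem_coe] at ha hb
    obtain ⟨a₀, ha₀, rfl⟩ := ha
    obtain ⟨b₀, hb₀, rfl⟩ := hb
    exact (hg a₀ b₀).mp (hK.1 ha₀ hb₀ (fun h => hab (by rw [h])))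
  · rw [Finset.card_image_of_injective _ g.injective, hK.2]

lemma countConst {r : ℕ} (G : Subgroup (Equiv.Perm X))
    (hAut : ∀ g ∈ G, ∀ x y : X, Γ.Adj x y ↔ Γ.Adj (g x) (g y))
    (hTrans : ∀ x y : X, ∃ g ∈ G, g x = y) (u v : X) :
    ((Γ.cliqueFinset r).filter (fun K => u ∈ K)).card
      = ((Γ.cliqueFinset r).filter (fun K => v ∈ K)).card := by
  obtain ⟨g, hgG, hguv⟩ := hTrans u v
  apply Finset.card_bij (fun K _ => K.image g)
  · intro K hK
    simp only [Finset.mem_filter, SimpleGraph.mem_cliqueFinset_iff] at hK ⊢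
    exact ⟨cliqueImage Γ g (hAut g hgG) hK.1, hguv ▸ Finset.mem_image_of_mem _ hK.2⟩
  · intro K₁ h₁ K₂ h₂ h
    exact Finset.image_injective g.injective h
  · intro K' hK'
    simp only [Finset.mem_filter, SimpleGraph.mem_cliqueFinset_iff] at hK'
    refine ⟨K'.image (⇑(g⁻¹ : Equiv.Perm X)), ?_, ?_⟩
    · simp only [Finset.mem_filter, SimpleGraph.mem_cliqueFinset_iff]
      refine ⟨cliqueImage Γ _ (hAut _ (inv_mem hgG)) hK'.1, ?_⟩
      have h2 : (g⁻¹ : Equiv.Perm X) v = u := by rw [← hguv]; simp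
      exact h2 ▸ Finset.mem_image_of_mem _ hK'.2
    · rw [Finset.image_image]
      have h3 : (⇑g ∘ ⇑(g⁻¹ : Equiv.Perm X)) = id := by ext w; simp
      rw [h3, Finset.image_id]

/-- W-rigidity: there is a max clique through `a` avoiding `d`. -/
lemma existsCliqueAvoiding {r : ℕ} (G : Subgroup (Equiv.Perm X))
    (hAut : ∀ g ∈ G, ∀ x y : X, Γ.Adj x y ↔ Γ.Adj (g x) (g y))
    (hPrim : IsPrimitivePermGroup G)
    (hNonComplete : ∃ x y : X, x ≠ y ∧ ¬ Γ.Adj x y)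
    {K₀ : Finset X} (hK₀ : Γ.IsNClique r K₀) (hK₀ne : K₀.Nonempty)
    {a d : X} (had : a ≠ d) :
    ∃ K, Γ.IsNClique r K ∧ a ∈ K ∧ d ∉ K := by
  by_contra hcon
  push_neg at hcon
  set Rw : X → X → Prop := fun u v => ∀ K, Γ.IsNClique r K → (u ∈ K ↔ v ∈ K) with hRw
  have hequiv : Equivalence Rw :=
    ⟨fun u K _ => Iff.rfl, fun h K hK => (h K hK).symm, fun h1 h2 K hK => (h1 K hK).trans (h2 K hK)⟩
  have hinv : ∀ g ∈ G, ∀ x y, Rw x y → Rw (g x) (g y) := by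
    intro g hg x y hxy K hK
    have h1 : ∀ w : X, g w ∈ K ↔ w ∈ K.image (⇑(g⁻¹ : Equiv.Perm X)) := by
      intro w
      constructor
      · intro h
        refine Finset.mem_image.mpr ⟨g w, h, ?_⟩
        simp
      · intro h
        obtain ⟨b, hb, rfl⟩ := Finset.mem_image.mp h
        simpa using hb
    rw [h1 x, h1 y]
    exact hxy _ (cliqueImage Γ _ (hAut _ (inv_mem hg)) hK)
  rcases hPrim.2 Rw hequiv hinv with htriv | huniv
  · have hsub : (Γ.cliqueFinset r).filter (fun K => a ∈ K)
        ⊆ (Γ.cliqueFinset r).filter (fun K => d ∈ K) := by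
      intro K hK
      simp only [Finset.mem_filter, SimpleGraph.mem_cliqueFinset_iff] at hK ⊢
      exact ⟨hK.1, hcon K hK.1 hK.2⟩
    have heq := Finset.eq_of_subset_of_card_le hsub
      (le_of_eq (countConst Γ G hAut hPrim.1 d a))
    have hRad : Rw a d := by
      intro K hK
      constructor
      · intro haK
        have : K ∈ (Γ.cliqueFinset r).filter (fun K => d ∈ K) := by
          rw [← heq]
          simp only [Finset.mem_filter, SimpleGraph.mem_cliqueFinset_iff]
          exact ⟨hK, haK⟩
        exact (Finset.mem_filter.mp this).2
      · intro hdK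
        have : K ∈ (Γ.cliqueFinset r).filter (fun K => a ∈ K) := by
          rw [heq]
          simp only [Finset.mem_filter, SimpleGraph.mem_cliqueFinset_iff]
          exact ⟨hK, hdK⟩
        exact (Finset.mem_filter.mp this).2
    exact had ((htriv a d).mp hRad)
  · obtain ⟨a₀, ha₀⟩ := hK₀ne
    obtain ⟨x₀, y₀, hne, hnadj⟩ := hNonComplete
    have hx₀ : x₀ ∈ K₀ := (huniv a₀ x₀ K₀ hK₀).mp ha₀
    have hy₀ : y₀ ∈ K₀ := (huniv a₀ y₀ K₀ hK₀).mp ha₀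
    exact hnadj (hK₀.1 hx₀ hy₀ hne)

/-- Q-rigidity: two distinct vertices cannot have equal colors in every proper r-coloring. -/
lemma colorForced {r : ℕ} (G : Subgroup (Equiv.Perm X))
    (hAut : ∀ g ∈ G, ∀ x y : X, Γ.Adj x y ↔ Γ.Adj (g x) (g y))
    (hPrim : IsPrimitivePermGroup G)
    (hEdge : ∃ x y : X, Γ.Adj x y)
    (C₀ : Γ.Coloring (Fin r))
    {a b : X} (hab : a ≠ b) (hQ : ∀ C : Γ.Coloring (Fin r), C a = C b) : False := by
  set Rq : X → X → Prop := fun u v => ∀ C : Γ.Coloring (Fin r), C u = C v with hRq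
  have hequiv : Equivalence Rq :=
    ⟨fun _ _ => rfl, fun h C => (h C).symm, fun h1 h2 C => (h1 C).trans (h2 C)⟩
  have hinv : ∀ g ∈ G, ∀ x y, Rq x y → Rq (g x) (g y) := by
    intro g hg x y hxy C
    exact hxy (SimpleGraph.Coloring.mk (fun w => C (g w))
      (fun hadj => C.valid ((hAut g hg _ _).mp hadj)))
  rcases hPrim.2 Rq hequiv hinv with htriv | huniv
  · exact hab ((htriv a b).mp hQ)
  · obtain ⟨x₀, y₀, hadj⟩ := hEdge
    exact C₀.valid hadj (huniv x₀ y₀ C₀)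

lemma cliqueTransversal {r : ℕ} {K : Finset X} (hK : Γ.IsNClique r K)
    (C : Γ.Coloring (Fin r)) (t : Fin r) : ∃ s ∈ K, C s = t := by
  have hinj : Set.InjOn C ↑K := by
    intro u hu v hv huv
    by_contra hne
    exact C.valid (hK.1 hu hv hne) huv
  have hcard : (K.image C).card = r := by
    rw [Finset.card_image_of_injOn hinj, hK.2]
  have huniv : K.image C = Finset.univ :=
    Finset.eq_univ_of_card _ (by rw [hcard]; simp)
  have ht : t ∈ K.image C := huniv ▸ Finset.mem_univ t
  obtain ⟨s, hs, hst⟩ := Finset.mem_image.mp ht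
  exact ⟨s, hs, hst⟩

lemma cliqueThrough {r : ℕ} (G : Subgroup (Equiv.Perm X))
    (hAut : ∀ g ∈ G, ∀ x y : X, Γ.Adj x y ↔ Γ.Adj (g x) (g y))
    (hTrans : ∀ x y : X, ∃ g ∈ G, g x = y)
    {K₀ : Finset X} (hK₀ : Γ.IsNClique r K₀) {a₀ : X} (ha₀ : a₀ ∈ K₀) (v : X) :
    ∃ K, Γ.IsNClique r K ∧ v ∈ K := by
  obtain ⟨g, hgG, hg⟩ := hTrans a₀ v
  exact ⟨K₀.image g, cliqueImage Γ g (hAut g hgG) hK₀, hg ▸ Finset.mem_image_of_mem _ ha₀⟩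

/-- Fact 1: any two distinct vertices have `|N(a) ∪ N(b)| ≥ k + 2`. -/
lemma pairLowerBound {r k : ℕ} (G : Subgroup (Equiv.Perm X))
    (hAut : ∀ g ∈ G, ∀ x y : X, Γ.Adj x y ↔ Γ.Adj (g x) (g y))
    (hPrim : IsPrimitivePermGroup G)
    (hEdge : ∃ x y : X, Γ.Adj x y)
    (hNonComplete : ∃ x y : X, x ≠ y ∧ ¬ Γ.Adj x y)
    (hreg : Γ.IsRegularOfDegree k)
    {K₀ : Finset X} (hK₀ : Γ.IsNClique r K₀) {a₀ : X} (ha₀ : a₀ ∈ K₀)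
    (C₀ : Γ.Coloring (Fin r))
    {a b : X} (hab : a ≠ b) :
    k + 2 ≤ (Γ.neighborFinset a ∪ Γ.neighborFinset b).card := by
  by_contra hle
  push_neg at hle
  have hNa : (Γ.neighborFinset a).card = k := hreg a
  have hNb : (Γ.neighborFinset b).card = k := hreg b
  have hD : (Γ.neighborFinset a \ Γ.neighborFinset b).card ≤ 1 := by
    have h := Finset.card_sdiff_add_card (Γ.neighborFinset a) (Γ.neighborFinset b)
    omega
  have hKex : ∃ K, Γ.IsNClique r K ∧ a ∈ K ∧
      ∀ s ∈ K, s ∉ Γ.neighborFinset a \ Γ.neighborFinset b := by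
    rcases Nat.le_one_iff_eq_zero_or_eq_one.mp hD with h0 | h1
    · obtain ⟨K, hK, haK⟩ := cliqueThrough Γ G hAut hPrim.1 hK₀ ha₀ a
      refine ⟨K, hK, haK, fun s _ hs => ?_⟩
      rw [Finset.card_eq_zero.mp h0] at hs
      exact absurd hs (Finset.notMem_empty s)
    · obtain ⟨d, hd⟩ := Finset.card_eq_one.mp h1
      have hdmem : d ∈ Γ.neighborFinset a \ Γ.neighborFinset b := by rw [hd]; simp
      have hda : a ≠ d := by
        intro h
        have := (Finset.mem_sdiff.mp hdmem).1
        rw [← h] at this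
        exact Γ.notMem_neighborFinset_self a this
      obtain ⟨K₀', hK₀ne⟩ : ∃ K₀', K₀.Nonempty := ⟨K₀, ⟨a₀, ha₀⟩⟩
      obtain ⟨K, hK, haK, hdK⟩ :=
        existsCliqueAvoiding Γ G hAut hPrim hNonComplete hK₀ ⟨a₀, ha₀⟩ hda
      refine ⟨K, hK, haK, fun s hsK hs => ?_⟩
      rw [hd, Finset.mem_singleton] at hs
      exact hdK (hs ▸ hsK)
  obtain ⟨K, hK, haK, hKav⟩ := hKex
  have hbK : b ∉ K := by
    intro hbK
    have hadj : Γ.Adj a b := hK.1 haK hbK hab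
    have hbNa : b ∈ Γ.neighborFinset a := (Γ.mem_neighborFinset a b).mpr hadj
    exact hKav b hbK (Finset.mem_sdiff.mpr ⟨hbNa, Γ.notMem_neighborFinset_self b⟩)
  have hforced : ∀ C : Γ.Coloring (Fin r), C a = C b := by
    intro C
    obtain ⟨s, hsK, hsC⟩ := cliqueTransversal Γ hK C (C b)
    by_cases hsa : s = a
    · rw [← hsa]; exact hsC
    · exfalso
      have hadj : Γ.Adj a s := hK.1 haK hsK (fun h => hsa h.symm)
      have hsNa : s ∈ Γ.neighborFinset a := (Γ.mem_neighborFinset a s).mpr hadj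
      have hsNb : s ∈ Γ.neighborFinset b := by
        by_contra h
        exact hKav s hsK (Finset.mem_sdiff.mpr ⟨hsNa, h⟩)
      exact C.valid ((Γ.mem_neighborFinset b s).mp hsNb) hsC.symm
  exact colorForced Γ G hAut hPrim hEdge C₀ hab hforced

end Aux

theorem stmt9 {X : Type*} [Fintype X] [DecidableEq X] (Γ : SimpleGraph X)
    [DecidableRel Γ.Adj] (k : ℕ)
    (G : Subgroup (Equiv.Perm X))
    (hAut : ∀ g ∈ G, ∀ x y : X, Γ.Adj x y ↔ Γ.Adj (g x) (g y))
    (hPrim : IsPrimitivePermGroup G)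
    (hreg : Γ.IsRegularOfDegree k)
    (hchrom : Γ.chromaticNumber = (Γ.cliqueNum : ℕ∞))
    (hEdge : ∃ x y : X, Γ.Adj x y)
    (hNonComplete : ∃ x y : X, x ≠ y ∧ ¬ Γ.Adj x y)
    (A₁ A₂ : Finset X) (h₁card : A₁.card = 3) (h₂card : A₂.card = 3)
    (h₁ : (A₁.biUnion fun a => Γ.neighborFinset a).card ≤ k + 2)
    (h₂ : (A₂.biUnion fun a => Γ.neighborFinset a).card ≤ k + 2)
    (hint : 2 ≤ (A₁ ∩ A₂).card) :
    A₁ = A₂ := by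
  classical
  by_contra hne
  set r : ℕ := Γ.cliqueNum with hrdef
  have hcol : Γ.Colorable r := by
    rw [← SimpleGraph.chromaticNumber_le_iff_colorable, hchrom]
  obtain ⟨C₀⟩ := hcol
  obtain ⟨K₀, hK₀⟩ := Γ.exists_isNClique_cliqueNum
  have hr2 : 2 ≤ r := by
    obtain ⟨x₀, y₀, hadj⟩ := hEdge
    have hcl : Γ.IsNClique 2 {x₀, y₀} := by
      constructor
      · intro u hu v hv huv
        simp only [Finset.coe_insert, Set.mem_insert_iff, Finset.coe_singleton,
          Set.mem_singleton_iff] at hu hv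
        rcases hu with rfl | rfl <;> rcases hv with rfl | rfl
        · exact absurd rfl huv
        · exact hadj
        · exact hadj.symm
        · exact absurd rfl huv
      · rw [Finset.card_insert_of_notMem (by simp [hadj.ne]), Finset.card_singleton]
    have := SimpleGraph.IsClique.card_le_cliqueNum (G := Γ) (t := {x₀, y₀}) (tc := hcl.1)
    rwa [hcl.2] at this
  have hK₀ne : K₀.Nonempty := by
    rw [← Finset.card_pos, hK₀.2]
    omega
  obtain ⟨a₀, ha₀⟩ := hK₀ne
  -- |A₁ ∩ A₂| = 2
  have hicard : (A₁ ∩ A₂).card = 2 := by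
    refine le_antisymm ?_ hint
    by_contra h
    push_neg at h
    have h1 : A₁ ∩ A₂ = A₁ :=
      Finset.eq_of_subset_of_card_le Finset.inter_subset_left (by omega)
    have hsub : A₁ ⊆ A₂ := by
      intro u hu
      rw [← h1] at hu
      exact (Finset.mem_inter.mp hu).2
    exact hne (Finset.eq_of_subset_of_card_le hsub (by omega))
  obtain ⟨x, y, hxy, hixy⟩ := Finset.card_eq_two.mp hicard
  have hxI : x ∈ A₁ ∩ A₂ := by rw [hixy]; simp
  have hyI : y ∈ A₁ ∩ A₂ := by rw [hixy]; simp
  have hxA₁ : x ∈ A₁ := (Finset.mem_inter.mp hxI).1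
  have hxA₂ : x ∈ A₂ := (Finset.mem_inter.mp hxI).2
  have hyA₁ : y ∈ A₁ := (Finset.mem_inter.mp hyI).1
  have hyA₂ : y ∈ A₂ := (Finset.mem_inter.mp hyI).2
  have hz1 : (A₁ \ A₂).card = 1 := by
    have h := Finset.card_sdiff_add_card_inter A₁ A₂
    omega
  have hw1 : (A₂ \ A₁).card = 1 := by
    have h := Finset.card_sdiff_add_card_inter A₂ A₁
    rw [Finset.inter_comm] at h
    omega
  obtain ⟨z, hz⟩ := Finset.card_eq_one.mp hz1
  obtain ⟨w, hw⟩ := Finset.card_eq_one.mp hw1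
  have hzmem : z ∈ A₁ \ A₂ := by rw [hz]; simp
  have hwmem : w ∈ A₂ \ A₁ := by rw [hw]; simp
  have hzA₁ : z ∈ A₁ := (Finset.mem_sdiff.mp hzmem).1
  have hzA₂ : z ∉ A₂ := (Finset.mem_sdiff.mp hzmem).2
  have hwA₂ : w ∈ A₂ := (Finset.mem_sdiff.mp hwmem).1
  have hwA₁ : w ∉ A₁ := (Finset.mem_sdiff.mp hwmem).2
  have hzw : z ≠ w := fun h => hzA₂ (h ▸ hwA₂)
  have hzx : z ≠ x := fun h => hzA₂ (h ▸ hxA₂)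
  have hzy : z ≠ y := fun h => hzA₂ (h ▸ hyA₂)
  have hwx : w ≠ x := fun h => hwA₁ (h ▸ hxA₁)
  have hwy : w ≠ y := fun h => hwA₁ (h ▸ hyA₁)
  -- the set U
  set U : Finset X := Γ.neighborFinset x ∪ Γ.neighborFinset y with hUdef
  have pairLB : ∀ a b : X, a ≠ b →
      k + 2 ≤ (Γ.neighborFinset a ∪ Γ.neighborFinset b).card := fun a b hab =>
    pairLowerBound Γ G hAut hPrim hEdge hNonComplete hreg hK₀ ha₀ C₀ hab
  have hUge : k + 2 ≤ U.card := pairLB x y hxy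
  have hUsub1 : U ⊆ A₁.biUnion (fun a => Γ.neighborFinset a) :=
    Finset.union_subset (Finset.subset_biUnion_of_mem (fun a => Γ.neighborFinset a) hxA₁)
      (Finset.subset_biUnion_of_mem (fun a => Γ.neighborFinset a) hyA₁)
  have hUsub2 : U ⊆ A₂.biUnion (fun a => Γ.neighborFinset a) :=
    Finset.union_subset (Finset.subset_biUnion_of_mem (fun a => Γ.neighborFinset a) hxA₂)
      (Finset.subset_biUnion_of_mem (fun a => Γ.neighborFinset a) hyA₂)
  have hB1 : U = A₁.biUnion (fun a => Γ.neighborFinset a) :=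
    Finset.eq_of_subset_of_card_le hUsub1 (le_trans h₁ hUge)
  have hB2 : U = A₂.biUnion (fun a => Γ.neighborFinset a) :=
    Finset.eq_of_subset_of_card_le hUsub2 (le_trans h₂ hUge)
  have hUcard : U.card = k + 2 := le_antisymm (by rw [hB1]; exact h₁) hUge
  have hNxU : Γ.neighborFinset x ⊆ U := Finset.subset_union_left
  have hNyU : Γ.neighborFinset y ⊆ U := Finset.subset_union_right
  have hNzU : Γ.neighborFinset z ⊆ U := by
    rw [hB1]
    exact Finset.subset_biUnion_of_mem (fun a => Γ.neighborFinset a) hzA₁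
  have hNwU : Γ.neighborFinset w ⊆ U := by
    rw [hB2]
    exact Finset.subset_biUnion_of_mem (fun a => Γ.neighborFinset a) hwA₂
  have hNcard : ∀ a : X, (Γ.neighborFinset a).card = k := hreg
  have hpairU : ∀ a b : X, a ≠ b → Γ.neighborFinset a ⊆ U → Γ.neighborFinset b ⊆ U →
      Γ.neighborFinset a ∪ Γ.neighborFinset b = U := by
    intro a b hab ha hb
    refine Finset.eq_of_subset_of_card_le (Finset.union_subset ha hb) ?_
    rw [hUcard]
    exact pairLB a b hab
  -- independence of {x, y, z, w}
  have hindep : ∀ a b : X, a ≠ b → Γ.neighborFinset a ⊆ U → Γ.neighborFinset b ⊆ U →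
      ¬ Γ.Adj a b := by
    intro a b hab ha hb hadj
    have hPb2 : (U \ Γ.neighborFinset b).card = 2 := by
      have h := Finset.card_sdiff_of_subset hb
      rw [hUcard, hNcard b] at h
      omega
    have hbPb : b ∈ U \ Γ.neighborFinset b :=
      Finset.mem_sdiff.mpr ⟨ha ((Γ.mem_neighborFinset a b).mpr hadj),
        Γ.notMem_neighborFinset_self b⟩
    obtain ⟨c₁, c₂, hc, hPbeq⟩ := Finset.card_eq_two.mp hPb2
    obtain ⟨b', hbb', hPbeq'⟩ : ∃ b', b ≠ b' ∧ U \ Γ.neighborFinset b = {b, b'} := by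
      rw [hPbeq] at hbPb
      rcases Finset.mem_insert.mp hbPb with rfl | hb2
      · exact ⟨c₂, hc, hPbeq⟩
      · rw [Finset.mem_singleton] at hb2
        subst hb2
        exact ⟨c₁, hc.symm, by rw [hPbeq, Finset.pair_comm]⟩
    obtain ⟨K, hK, haK, hbK⟩ :=
      existsCliqueAvoiding Γ G hAut hPrim hNonComplete hK₀ ⟨a₀, ha₀⟩ hab
    have hforced : ∀ C : Γ.Coloring (Fin r), C b = C b' := by
      intro C
      obtain ⟨s, hsK, hsC⟩ := cliqueTransversal Γ hK C (C b)
      have hsa : s ≠ a := by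
        rintro rfl
        exact C.valid hadj hsC
      have hadj' : Γ.Adj a s := hK.1 haK hsK (Ne.symm hsa)
      have hsU : s ∈ U := ha ((Γ.mem_neighborFinset a s).mpr hadj')
      have hsNb : s ∉ Γ.neighborFinset b := by
        intro h
        exact C.valid ((Γ.mem_neighborFinset b s).mp h) hsC.symm
      have hsP : s ∈ U \ Γ.neighborFinset b := Finset.mem_sdiff.mpr ⟨hsU, hsNb⟩
      rw [hPbeq'] at hsP
      rcases Finset.mem_insert.mp hsP with rfl | hs2
      · exact absurd hsK hbK
      · rw [Finset.mem_singleton] at hs2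
        rw [← hs2]
        exact hsC.symm
    exact colorForced Γ G hAut hPrim hEdge C₀ hbb' hforced
  have hnxy : ¬ Γ.Adj x y := hindep x y hxy hNxU hNyU
  have hnxz : ¬ Γ.Adj x z := hindep x z (Ne.symm hzx) hNxU hNzU
  have hnxw : ¬ Γ.Adj x w := hindep x w (Ne.symm hwx) hNxU hNwU
  have hnyz : ¬ Γ.Adj y z := hindep y z (Ne.symm hzy) hNyU hNzU
  have hnyw : ¬ Γ.Adj y w := hindep y w (Ne.symm hwy) hNyU hNwU
  have hnzw : ¬ Γ.Adj z w := hindep z w hzw hNzU hNwU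
  -- x, z, w ∉ U, y ∉ U
  have hmemU : ∀ s : X, s ∈ U → Γ.Adj x s ∨ Γ.Adj y s := by
    intro s hs
    rcases Finset.mem_union.mp hs with h | h
    · exact Or.inl ((Γ.mem_neighborFinset x s).mp h)
    · exact Or.inr ((Γ.mem_neighborFinset y s).mp h)
  have hxU : x ∉ U := by
    intro h
    rcases hmemU x h with h' | h'
    · exact Γ.loopless.irrefl x h'
    · exact hnxy h'.symm
  have hzU : z ∉ U := by
    intro h
    rcases hmemU z h with h' | h'
    · exact hnxz h'
    · exact hnyz h'
  have hwU : w ∉ U := by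
    intro h
    rcases hmemU w h with h' | h'
    · exact hnxw h'
    · exact hnyw h'
  -- the pair P_y
  have hPy2 : (U \ Γ.neighborFinset y).card = 2 := by
    have h := Finset.card_sdiff_of_subset hNyU
    rw [hUcard, hNcard y] at h
    omega
  obtain ⟨p₁, p₂, hp12, hPy⟩ := Finset.card_eq_two.mp hPy2
  have hp₁mem : p₁ ∈ U \ Γ.neighborFinset y := by rw [hPy]; simp
  have hp₂mem : p₂ ∈ U \ Γ.neighborFinset y := by rw [hPy]; simp
  have hp₁U : p₁ ∈ U := (Finset.mem_sdiff.mp hp₁mem).1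
  have hp₂U : p₂ ∈ U := (Finset.mem_sdiff.mp hp₂mem).1
  -- a coloring distinguishing x and y
  obtain ⟨C, hCxy⟩ : ∃ C : Γ.Coloring (Fin r), C x ≠ C y := by
    by_contra h
    push_neg at h
    exact colorForced Γ G hAut hPrim hEdge C₀ hxy h
  -- propagation
  have SC : ∀ a b e : X, Γ.neighborFinset a ∪ Γ.neighborFinset b = U →
      Γ.neighborFinset e ⊆ U → C a = C b → C e = C a := by
    intro a b e hab' he hCab
    obtain ⟨K, hK, heK⟩ := cliqueThrough Γ G hAut hPrim.1 hK₀ ha₀ e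
    obtain ⟨s, hsK, hsC⟩ := cliqueTransversal Γ hK C (C a)
    by_cases hse : s = e
    · rw [← hse]; exact hsC
    · exfalso
      have hadj : Γ.Adj e s := hK.1 heK hsK (Ne.symm hse)
      have hsU : s ∈ U := he ((Γ.mem_neighborFinset e s).mpr hadj)
      rw [← hab'] at hsU
      rcases Finset.mem_union.mp hsU with h | h
      · exact C.valid ((Γ.mem_neighborFinset a s).mp h) hsC.symm
      · exact C.valid ((Γ.mem_neighborFinset b s).mp h) (hsC.trans hCab).symm
  -- all four colors distinct
  have hCxz : C x ≠ C z := fun h =>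
    hCxy (SC x z y (hpairU x z (Ne.symm hzx) hNxU hNzU) hNyU h).symm
  have hCyz : C y ≠ C z := fun h =>
    hCxy (SC y z x (hpairU y z (Ne.symm hzy) hNyU hNzU) hNxU h)
  have hCxw : C x ≠ C w := fun h =>
    hCxy (SC x w y (hpairU x w (Ne.symm hwx) hNxU hNwU) hNyU h).symm
  have hCyw : C y ≠ C w := fun h =>
    hCxy (SC y w x (hpairU y w (Ne.symm hwy) hNyU hNwU) hNxU h)
  have hCzw : C z ≠ C w := by
    intro h
    have h1 := SC z w x (hpairU z w hzw hNzU hNwU) hNxU h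
    have h2 := SC z w y (hpairU z w hzw hNzU hNwU) hNyU h
    exact hCxy (h1.trans h2.symm)
  -- every clique through b ∈ {x,z,w} meets P_y in a C y-colored vertex
  have hmeet : ∀ b : X, Γ.neighborFinset b ⊆ U → C b ≠ C y →
      ∀ K, Γ.IsNClique r K → b ∈ K →
        ∃ s, s ∈ K ∧ s ∈ U \ Γ.neighborFinset y ∧ C s = C y := by
    intro b hbU hCb K hK hbK
    obtain ⟨s, hsK, hsC⟩ := cliqueTransversal Γ hK C (C y)
    have hsb : s ≠ b := by
      rintro rfl
      exact hCb hsC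
    have hadj : Γ.Adj b s := hK.1 hbK hsK (Ne.symm hsb)
    have hsU : s ∈ U := hbU ((Γ.mem_neighborFinset b s).mpr hadj)
    have hsNy : s ∉ Γ.neighborFinset y := by
      intro h
      exact C.valid ((Γ.mem_neighborFinset y s).mp h) hsC.symm
    exact ⟨s, hsK, Finset.mem_sdiff.mpr ⟨hsU, hsNy⟩, hsC⟩
  -- both p₁ and p₂ have color C y
  have hpcol : ∀ p q : X, U \ Γ.neighborFinset y = {p, q} → C q ≠ C y → False := by
    intro p q hpq hCq
    have hall : ∀ K, Γ.IsNClique r K → x ∈ K → p ∈ K := by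
      intro K hK hxK
      obtain ⟨s, hsK, hsPy, hsC⟩ := hmeet x hNxU hCxy K hK hxK
      rw [hpq] at hsPy
      rcases Finset.mem_insert.mp hsPy with rfl | hs2
      · exact hsK
      · rw [Finset.mem_singleton] at hs2
        exact absurd (hs2 ▸ hsC) hCq
    have hpU : p ∈ U := by
      have : p ∈ U \ Γ.neighborFinset y := by rw [hpq]; simp
      exact (Finset.mem_sdiff.mp this).1
    have hxp : x ≠ p := fun h => hxU (h ▸ hpU)
    obtain ⟨K, hK, hxK, hpK⟩ :=
      existsCliqueAvoiding Γ G hAut hPrim hNonComplete hK₀ ⟨a₀, ha₀⟩ hxp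
    exact hpK (hall K hK hxK)
  have hCp₁ : C p₁ = C y := by
    by_contra h
    exact hpcol p₂ p₁ (by rw [hPy, Finset.pair_comm]) h
  have hCp₂ : C p₂ = C y := by
    by_contra h
    exact hpcol p₁ p₂ hPy h
  have hpnadj : ¬ Γ.Adj p₁ p₂ := fun h => C.valid h (hCp₁.trans hCp₂.symm)
  -- counting cliques
  have hTcount : ∀ u v : X,
      ((Γ.cliqueFinset r).filter (fun K => u ∈ K)).card
        = ((Γ.cliqueFinset r).filter (fun K => v ∈ K)).card :=
    fun u v => countConst Γ G hAut hPrim.1 u v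
  have hsplit : ∀ b : X, Γ.neighborFinset b ⊆ U → C b ≠ C y →
      ((Γ.cliqueFinset r).filter (fun K => b ∈ K)).card
        = ((Γ.cliqueFinset r).filter (fun K => b ∈ K ∧ p₁ ∈ K)).card
          + ((Γ.cliqueFinset r).filter (fun K => b ∈ K ∧ p₂ ∈ K)).card := by
    intro b hbU hCb
    have hdisj : Disjoint ((Γ.cliqueFinset r).filter (fun K => b ∈ K ∧ p₁ ∈ K))
        ((Γ.cliqueFinset r).filter (fun K => b ∈ K ∧ p₂ ∈ K)) := by
      rw [Finset.disjoint_left]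
      intro K h1 h2
      simp only [Finset.mem_filter, SimpleGraph.mem_cliqueFinset_iff] at h1 h2
      exact hpnadj (h1.1.1 h1.2.2 h2.2.2 hp12)
    rw [← Finset.card_union_of_disjoint hdisj]
    congr 1
    ext K
    simp only [Finset.mem_filter, Finset.mem_union, SimpleGraph.mem_cliqueFinset_iff]
    constructor
    · rintro ⟨hKcl, hbK⟩
      obtain ⟨s, hsK, hsPy, hsC⟩ := hmeet b hbU hCb K hKcl hbK
      rw [hPy] at hsPy
      rcases Finset.mem_insert.mp hsPy with rfl | hs2
      · exact Or.inl ⟨hKcl, hbK, hsK⟩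
      · rw [Finset.mem_singleton] at hs2
        exact Or.inr ⟨hKcl, hbK, hs2 ▸ hsK⟩
    · rintro (⟨h1, h2, _⟩ | ⟨h1, h2, _⟩) <;> exact ⟨h1, h2⟩
  have hsum : ∀ p : X, p ∈ U →
      ((Γ.cliqueFinset r).filter (fun K => x ∈ K ∧ p ∈ K)).card
        + ((Γ.cliqueFinset r).filter (fun K => z ∈ K ∧ p ∈ K)).card
        + ((Γ.cliqueFinset r).filter (fun K => w ∈ K ∧ p ∈ K)).card
      ≤ ((Γ.cliqueFinset r).filter (fun K => p ∈ K)).card := by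
    intro p _
    have hd1 : Disjoint ((Γ.cliqueFinset r).filter (fun K => x ∈ K ∧ p ∈ K))
        ((Γ.cliqueFinset r).filter (fun K => z ∈ K ∧ p ∈ K)) := by
      rw [Finset.disjoint_left]
      intro K h1 h2
      simp only [Finset.mem_filter, SimpleGraph.mem_cliqueFinset_iff] at h1 h2
      exact hnxz (h1.1.1 h1.2.1 h2.2.1 (Ne.symm hzx))
    have hd2 : Disjoint ((Γ.cliqueFinset r).filter (fun K => x ∈ K ∧ p ∈ K)
        ∪ (Γ.cliqueFinset r).filter (fun K => z ∈ K ∧ p ∈ K))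
        ((Γ.cliqueFinset r).filter (fun K => w ∈ K ∧ p ∈ K)) := by
      rw [Finset.disjoint_left]
      intro K h1 h2
      simp only [Finset.mem_union, Finset.mem_filter,
        SimpleGraph.mem_cliqueFinset_iff] at h1 h2
      rcases h1 with h1 | h1
      · exact hnxw (h1.1.1 h1.2.1 h2.2.1 (Ne.symm hwx))
      · exact hnzw (h1.1.1 h1.2.1 h2.2.1 hzw)
    calc ((Γ.cliqueFinset r).filter (fun K => x ∈ K ∧ p ∈ K)).card
        + ((Γ.cliqueFinset r).filter (fun K => z ∈ K ∧ p ∈ K)).card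
        + ((Γ.cliqueFinset r).filter (fun K => w ∈ K ∧ p ∈ K)).card
        = (((Γ.cliqueFinset r).filter (fun K => x ∈ K ∧ p ∈ K)
          ∪ (Γ.cliqueFinset r).filter (fun K => z ∈ K ∧ p ∈ K))
          ∪ (Γ.cliqueFinset r).filter (fun K => w ∈ K ∧ p ∈ K)).card := by
          rw [Finset.card_union_of_disjoint hd2, Finset.card_union_of_disjoint hd1]
      _ ≤ _ := by
          apply Finset.card_le_card
          intro K hK
          simp only [Finset.mem_union, Finset.mem_filter,
            SimpleGraph.mem_cliqueFinset_iff] at hK ⊢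
          rcases hK with (h | h) | h
          · exact ⟨h.1, h.2.2⟩
          · exact ⟨h.1, h.2.2⟩
          · exact ⟨h.1, h.2.2⟩
  obtain ⟨Kx, hKx, hxKx⟩ := cliqueThrough Γ G hAut hPrim.1 hK₀ ha₀ x
  have hm1 : 1 ≤ ((Γ.cliqueFinset r).filter (fun K => x ∈ K)).card :=
    Finset.card_pos.mpr ⟨Kx, Finset.mem_filter.mpr ⟨SimpleGraph.mem_cliqueFinset_iff.mpr hKx, hxKx⟩⟩
  have e1 := hsplit x hNxU hCxy
  have e2 := hsplit z hNzU (Ne.symm hCyz)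
  have e3 := hsplit w hNwU (Ne.symm hCyw)
  have s1 := hsum p₁ hp₁U
  have s2 := hsum p₂ hp₂U
  have c2 := hTcount z x
  have c3 := hTcount w x
  have c4 := hTcount p₁ x
  have c5 := hTcount p₂ x
  omega
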